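/- The ATT influence function in the target population has mean zero: under the setting-II assumptions, E[ (G/((1−q)e0))·( A(Y−μ1(X))/e1(X) − (1−A)(Y−μ0(X))/(1−e1(X)) )·((1−π(X))e0(X)/π(X)) + ((1−G)A/((1−q)e0))·(μ1(X)−μ0(X)−τ_att) ] = 0, where τ_att = E[Y(1)−Y(0)|G=0,A=1] and e0 = P(A=1|G=0). -/

import Mathlib

open MeasureTheory ProbabilityTheory

lemma aux_int_mul_le_one {Ω : Type*} {mΩ : MeasurableSpace Ω} {P : Measure Ω}
    {B W : Ω → ℝ} (hB : AEStronglyMeasurable B P) (hB1 : ∀ᵐ ω ∂P, |B ω| ≤ 1)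
    (hW : Integrable W P) : Integrable (fun ω => B ω * W ω) P := by
  refine Integrable.mono' hW.abs (hB.mul hW.1) ?_
  filter_upwards [hB1] with ω h
  rw [Real.norm_eq_abs, abs_mul]
  exact mul_le_of_le_one_left (abs_nonneg _) h

open Filter Topology in
lemma condexp_ext_of_integrable
    {Ω : Type*} (m : MeasurableSpace Ω) [mΩ : MeasurableSpace Ω]
    (P : Measure Ω) [IsProbabilityMeasure P]
    (Y0 Y1 B D c : Ω → ℝ)
    (hY0m : Measurable Y0) (hY1m : Measurable Y1)
    (hBm : Measurable B) (hDm : Measurable D)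
    (hB1 : ∀ ω, |B ω| ≤ 1) (hD1 : ∀ ω, |D ω| ≤ 1)
    (hc1 : ∀ᵐ ω ∂P, |c ω| ≤ 1) (hcm : AEStronglyMeasurable c P)
    (H : ∀ f : ℝ × ℝ → ℝ, Measurable f → (∃ C, ∀ p, |f p| ≤ C) →
      P[fun ω => B ω * f (Y0 ω, Y1 ω) | m]
        =ᵐ[P] fun ω => c ω * (P[fun ω => D ω * f (Y0 ω, Y1 ω) | m]) ω)
    (f : ℝ × ℝ → ℝ) (hf : Measurable f)
    (hfint : Integrable (fun ω => f (Y0 ω, Y1 ω)) P) :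
    P[fun ω => B ω * f (Y0 ω, Y1 ω) | m]
      =ᵐ[P] fun ω => c ω * (P[fun ω => D ω * f (Y0 ω, Y1 ω) | m]) ω := by
  classical
  have hpair : Measurable fun ω => (Y0 ω, Y1 ω) := hY0m.prodMk hY1m
  set g : ℕ → ℝ × ℝ → ℝ := fun n p => max (min (f p) (n : ℝ)) (-(n : ℝ)) with hgdef
  have hgm : ∀ n, Measurable (g n) := fun n => (hf.min measurable_const).max measurable_const
  have hgb : ∀ n, ∀ p, |g n p| ≤ (n : ℝ) := by
    intro n p
    simp only [hgdef]
    have hn : (0:ℝ) ≤ n := Nat.cast_nonneg n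
    rw [abs_le]
    exact ⟨le_max_right _ _, max_le (min_le_right _ _) (by linarith)⟩
  have hgle : ∀ n p, |g n p| ≤ |f p| := by
    intro n p
    simp only [hgdef]
    have hn : (0:ℝ) ≤ n := Nat.cast_nonneg n
    rw [abs_le]
    constructor
    · refine le_trans (le_min (neg_abs_le _) ?_) (le_max_left _ _)
      linarith [abs_nonneg (f p)]
    · exact max_le ((min_le_left _ _).trans (le_abs_self _))
        (le_trans (by linarith) (abs_nonneg (f p)))
  have hgtend : ∀ p, ∀ᶠ n in atTop, g n p = f p := by
    intro p
    filter_upwards [eventually_ge_atTop ⌈|f p|⌉₊] with n hn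
    have h1 : |f p| ≤ (n : ℝ) := le_trans (Nat.le_ceil _) (Nat.cast_le.2 hn)
    have h2 := neg_abs_le (f p)
    have h3 := le_abs_self (f p)
    simp only [hgdef]
    rw [min_eq_left (by linarith), max_eq_left (by linarith)]
  -- integrabilities of truncations
  have hWint : Integrable (fun ω => f (Y0 ω, Y1 ω)) P := hfint
  have hWn_int : ∀ n, Integrable (fun ω => g n (Y0 ω, Y1 ω)) P := by
    intro n
    refine hfint.abs.mono' ((hgm n).comp hpair).aestronglyMeasurable ?_
    filter_upwards with ω
    rw [Real.norm_eq_abs]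
    exact hgle n _
  have hB1' : ∀ᵐ ω ∂P, |B ω| ≤ 1 := Eventually.of_forall hB1
  have hD1' : ∀ᵐ ω ∂P, |D ω| ≤ 1 := Eventually.of_forall hD1
  have HBW : Integrable (fun ω => B ω * f (Y0 ω, Y1 ω)) P :=
    aux_int_mul_le_one hBm.aestronglyMeasurable hB1' hWint
  have HDW : Integrable (fun ω => D ω * f (Y0 ω, Y1 ω)) P :=
    aux_int_mul_le_one hDm.aestronglyMeasurable hD1' hWint
  have HBWn : ∀ n, Integrable (fun ω => B ω * g n (Y0 ω, Y1 ω)) P := fun n =>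
    aux_int_mul_le_one hBm.aestronglyMeasurable hB1' (hWn_int n)
  have HDWn : ∀ n, Integrable (fun ω => D ω * g n (Y0 ω, Y1 ω)) P := fun n =>
    aux_int_mul_le_one hDm.aestronglyMeasurable hD1' (hWn_int n)
  -- the L1 distances
  have hδ : Tendsto (fun n => ∫ ω, |g n (Y0 ω, Y1 ω) - f (Y0 ω, Y1 ω)| ∂P) atTop (𝓝 0) := by
    have := tendsto_integral_of_dominated_convergence (μ := P)
      (F := fun n ω => |g n (Y0 ω, Y1 ω) - f (Y0 ω, Y1 ω)|) (f := fun _ => (0:ℝ))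
      (bound := fun ω => 2 * |f (Y0 ω, Y1 ω)|)
      (fun n => (((hgm n).comp hpair).sub (hf.comp hpair)).abs.aestronglyMeasurable)
      (hfint.abs.const_mul 2)
      (by
        intro n
        filter_upwards with ω
        rw [Real.norm_eq_abs, abs_abs]
        have h1 := hgle n (Y0 ω, Y1 ω)
        have h2 := abs_sub (g n (Y0 ω, Y1 ω)) (f (Y0 ω, Y1 ω))
        linarith)
      (by
        filter_upwards with ω
        refine Tendsto.congr' ?_ (tendsto_const_nhds : Tendsto (fun _ : ℕ => (0:ℝ)) atTop (𝓝 0))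
        filter_upwards [hgtend (Y0 ω, Y1 ω)] with n hn
        rw [hn]
        simp)
    simpa using this
  set L := P[fun ω => B ω * f (Y0 ω, Y1 ω) | m] with hLdef
  set CDW := P[fun ω => D ω * f (Y0 ω, Y1 ω) | m] with hCDWdef
  have hLint : Integrable L P := integrable_condExp
  have hRint : Integrable (fun ω => c ω * CDW ω) P :=
    aux_int_mul_le_one hcm hc1 integrable_condExp
  have key : ∀ n, ∫ ω, |L ω - c ω * CDW ω| ∂P ≤
      (∫ ω, |g n (Y0 ω, Y1 ω) - f (Y0 ω, Y1 ω)| ∂P) +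
      ∫ ω, |g n (Y0 ω, Y1 ω) - f (Y0 ω, Y1 ω)| ∂P := by
    intro n
    set Ln := P[fun ω => B ω * g n (Y0 ω, Y1 ω) | m] with hLndef
    set CDWn := P[fun ω => D ω * g n (Y0 ω, Y1 ω) | m] with hCDWndef
    have hHn : Ln =ᵐ[P] fun ω => c ω * CDWn ω := H (g n) (hgm n) ⟨n, hgb n⟩
    -- bound on ∫ |L - Ln|
    have hdiffB : (fun ω => B ω * f (Y0 ω, Y1 ω)) - (fun ω => B ω * g n (Y0 ω, Y1 ω))
        = fun ω => B ω * (f (Y0 ω, Y1 ω) - g n (Y0 ω, Y1 ω)) := by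
      funext ω
      simp [mul_sub]
    have hsubB : (fun ω => L ω - Ln ω) =ᵐ[P]
        P[fun ω => B ω * (f (Y0 ω, Y1 ω) - g n (Y0 ω, Y1 ω)) | m] := by
      have h := (condExp_sub (m := m) HBW (HBWn n)).symm
      rw [hdiffB] at h
      exact h
    have hBd : Integrable (fun ω => B ω * (f (Y0 ω, Y1 ω) - g n (Y0 ω, Y1 ω))) P :=
      aux_int_mul_le_one hBm.aestronglyMeasurable hB1' (hfint.sub (hWn_int n))
    have e1' : ∫ ω, |L ω - Ln ω| ∂P ≤ ∫ ω, |g n (Y0 ω, Y1 ω) - f (Y0 ω, Y1 ω)| ∂P := by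
      calc ∫ ω, |L ω - Ln ω| ∂P
          = ∫ ω, |(P[fun ω => B ω * (f (Y0 ω, Y1 ω) - g n (Y0 ω, Y1 ω)) | m]) ω| ∂P := by
            refine integral_congr_ae ?_
            filter_upwards [hsubB] with ω h
            rw [← h]
        _ ≤ ∫ ω, |B ω * (f (Y0 ω, Y1 ω) - g n (Y0 ω, Y1 ω))| ∂P := integral_abs_condExp_le _
        _ ≤ ∫ ω, |f (Y0 ω, Y1 ω) - g n (Y0 ω, Y1 ω)| ∂P := by
            refine integral_mono_ae hBd.abs (hfint.sub (hWn_int n)).abs ?_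
            filter_upwards with ω
            rw [abs_mul]
            exact mul_le_of_le_one_left (abs_nonneg _) (hB1 ω)
        _ = ∫ ω, |g n (Y0 ω, Y1 ω) - f (Y0 ω, Y1 ω)| ∂P :=
            integral_congr_ae (Eventually.of_forall fun ω => abs_sub_comm _ _)
    -- bound on ∫ |c·CDWn - c·CDW|
    have hdiffD : (fun ω => D ω * g n (Y0 ω, Y1 ω)) - (fun ω => D ω * f (Y0 ω, Y1 ω))
        = fun ω => D ω * (g n (Y0 ω, Y1 ω) - f (Y0 ω, Y1 ω)) := by
      funext ω
      simp [mul_sub]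
    have hsubD : (fun ω => CDWn ω - CDW ω) =ᵐ[P]
        P[fun ω => D ω * (g n (Y0 ω, Y1 ω) - f (Y0 ω, Y1 ω)) | m] := by
      have h := (condExp_sub (m := m) (HDWn n) HDW).symm
      rw [hdiffD] at h
      exact h
    have hDd : Integrable (fun ω => D ω * (g n (Y0 ω, Y1 ω) - f (Y0 ω, Y1 ω))) P :=
      aux_int_mul_le_one hDm.aestronglyMeasurable hD1' ((hWn_int n).sub hfint)
    have hRnint : Integrable (fun ω => c ω * CDWn ω) P :=
      aux_int_mul_le_one hcm hc1 integrable_condExp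
    have e2' : ∫ ω, |c ω * CDWn ω - c ω * CDW ω| ∂P ≤
        ∫ ω, |g n (Y0 ω, Y1 ω) - f (Y0 ω, Y1 ω)| ∂P := by
      calc ∫ ω, |c ω * CDWn ω - c ω * CDW ω| ∂P
          ≤ ∫ ω, |CDWn ω - CDW ω| ∂P := by
            refine integral_mono_ae (hRnint.sub hRint).abs
              ((integrable_condExp.sub integrable_condExp).abs) ?_
            filter_upwards [hc1] with ω h
            rw [← mul_sub, abs_mul]
            exact mul_le_of_le_one_left (abs_nonneg _) h
        _ = ∫ ω, |(P[fun ω => D ω * (g n (Y0 ω, Y1 ω) - f (Y0 ω, Y1 ω)) | m]) ω| ∂P := by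
            refine integral_congr_ae ?_
            filter_upwards [hsubD] with ω h
            rw [← h]
        _ ≤ ∫ ω, |D ω * (g n (Y0 ω, Y1 ω) - f (Y0 ω, Y1 ω))| ∂P := integral_abs_condExp_le _
        _ ≤ ∫ ω, |g n (Y0 ω, Y1 ω) - f (Y0 ω, Y1 ω)| ∂P := by
            refine integral_mono_ae hDd.abs ((hWn_int n).sub hfint).abs ?_
            filter_upwards with ω
            rw [abs_mul]
            exact mul_le_of_le_one_left (abs_nonneg _) (hD1 ω)
    -- triangle inequality
    have hLnint : Integrable Ln P := integrable_condExp
    have hd1 : Integrable (fun ω => |L ω - Ln ω|) P := (hLint.sub hLnint).abs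
    have hd2 : Integrable (fun ω => |c ω * CDWn ω - c ω * CDW ω|) P := (hRnint.sub hRint).abs
    have tri : ∫ ω, |L ω - c ω * CDW ω| ∂P ≤
        (∫ ω, |L ω - Ln ω| ∂P) + ∫ ω, |c ω * CDWn ω - c ω * CDW ω| ∂P := by
      calc ∫ ω, |L ω - c ω * CDW ω| ∂P
          ≤ ∫ ω, (|L ω - Ln ω| + |c ω * CDWn ω - c ω * CDW ω|) ∂P := by
            refine integral_mono_ae (hLint.sub hRint).abs (hd1.add hd2) ?_
            filter_upwards [hHn] with ω h
            calc |L ω - c ω * CDW ω| ≤ |L ω - Ln ω| + |Ln ω - c ω * CDW ω| := abs_sub_le _ _ _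
              _ = |L ω - Ln ω| + |c ω * CDWn ω - c ω * CDW ω| := by rw [h]
        _ = (∫ ω, |L ω - Ln ω| ∂P) + ∫ ω, |c ω * CDWn ω - c ω * CDW ω| ∂P :=
            integral_add hd1 hd2
    linarith
  have hI : ∫ ω, |L ω - c ω * CDW ω| ∂P ≤ 0 :=
    ge_of_tendsto' (by simpa using hδ.add hδ) key
  have hI0 : ∫ ω, |L ω - c ω * CDW ω| ∂P = 0 :=
    le_antisymm hI (integral_nonneg fun ω => abs_nonneg _)
  have hz := (integral_eq_zero_iff_of_nonneg (fun ω => abs_nonneg _)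
    (hLint.sub hRint).abs).1 hI0
  filter_upwards [hz] with ω h
  have : |L ω - c ω * CDW ω| = 0 := h
  have := abs_eq_zero.1 this
  linarith



def mX {Ω : Type*} (X : Ω → ℝ) : MeasurableSpace Ω :=
  MeasurableSpace.comap X inferInstance

set_option maxHeartbeats 3200000 in
theorem target_att_eif_mean_zero
    {Ω : Type*} [MeasurableSpace Ω] (P : Measure Ω) [IsProbabilityMeasure P]
    (X A G Y0 Y1 Y : Ω → ℝ)
    (hX : Measurable X) (hA : Measurable A) (hG : Measurable G)
    (hY0m : Measurable Y0) (hY1m : Measurable Y1)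
    (hY0 : Integrable Y0 P) (hY1 : Integrable Y1 P)
    (hAbin : ∀ ω, A ω = 0 ∨ A ω = 1) (hGbin : ∀ ω, G ω = 0 ∨ G ω = 1)
    (hcons : ∀ ω, Y ω = A ω * Y1 ω + (1 - A ω) * Y0 ω)
    (e1 π μ0 μ1 : ℝ → ℝ)
    (he1m : Measurable e1) (hπm : Measurable π)
    (hμ0m : Measurable μ0) (hμ1m : Measurable μ1)
    (hπ : (fun ω => π (X ω)) =ᵐ[P] P[G | mX X])
    (he1 : (fun ω => e1 (X ω) * π (X ω)) =ᵐ[P] P[fun ω => A ω * G ω | mX X])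
    (hpose : ∀ᵐ ω ∂P, 0 < e1 (X ω) ∧ e1 (X ω) < 1)
    (hposπ : ∀ᵐ ω ∂P, 0 < π (X ω) ∧ π (X ω) < 1)
    (hunconf : ∀ f : ℝ × ℝ → ℝ, Measurable f → (∃ C, ∀ p, |f p| ≤ C) →
      P[fun ω => G ω * A ω * f (Y0 ω, Y1 ω) | mX X]
        =ᵐ[P] fun ω => e1 (X ω) * (P[fun ω => G ω * f (Y0 ω, Y1 ω) | mX X]) ω)
    (htrans : ∀ f : ℝ × ℝ → ℝ, Measurable f → (∃ C, ∀ p, |f p| ≤ C) →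
      P[fun ω => G ω * f (Y0 ω, Y1 ω) | mX X]
        =ᵐ[P] fun ω => π (X ω) * (P[fun ω => f (Y0 ω, Y1 ω) | mX X]) ω)
    (hμ1 : (fun ω => μ1 (X ω) * e1 (X ω) * π (X ω)) =ᵐ[P]
      P[fun ω => A ω * G ω * Y ω | mX X])
    (hμ0 : (fun ω => μ0 (X ω) * (1 - e1 (X ω)) * π (X ω)) =ᵐ[P]
      P[fun ω => (1 - A ω) * G ω * Y ω | mX X])
    (e0 : ℝ → ℝ) (he0m : Measurable e0)
    (he0 : (fun ω => e0 (X ω) * (1 - π (X ω))) =ᵐ[P] P[fun ω => A ω * (1 - G ω) | mX X])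
    (hpose0 : ∀ᵐ ω ∂P, 0 < e0 (X ω) ∧ e0 (X ω) < 1)
    (hunconf0 : ∀ f : ℝ × ℝ → ℝ, Measurable f → (∃ C, ∀ p, |f p| ≤ C) →
      P[fun ω => (1 - G ω) * A ω * f (Y0 ω, Y1 ω) | mX X]
        =ᵐ[P] fun ω => e0 (X ω) * (P[fun ω => (1 - G ω) * f (Y0 ω, Y1 ω) | mX X]) ω)
    (q ebar τatt : ℝ)
    (hq : q = (P {ω | G ω = 1}).toReal) (hq0 : 0 < q) (hq1 : q < 1)
    (hebar : ebar = (∫ ω, A ω * (1 - G ω) ∂P) / (1 - q)) (hebarpos : 0 < ebar)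
    (hτatt : τatt = (∫ ω, A ω * (1 - G ω) * (Y1 ω - Y0 ω) ∂P) / ((1 - q) * ebar))
    (φatt : Ω → ℝ)
    (hφatt : ∀ ω, φatt ω =
      G ω / ((1 - q) * ebar) *
        (A ω * (Y ω - μ1 (X ω)) / e1 (X ω)
          - (1 - A ω) * (Y ω - μ0 (X ω)) / (1 - e1 (X ω)))
        * ((1 - π (X ω)) * e0 (X ω) / π (X ω))
      + (1 - G ω) * A ω / ((1 - q) * ebar) * (μ1 (X ω) - μ0 (X ω) - τatt))
    (hφattint : Integrable φatt P) :
    ∫ ω, φatt ω ∂P = 0 := by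
  classical
  have hm : mX X ≤ ‹MeasurableSpace Ω› := hX.comap_le
  have hXm : Measurable[mX X] X := Measurable.of_comap_le le_rfl
  -- basic bounds
  have hA1 : ∀ ω, |A ω| ≤ 1 := by intro ω; rcases hAbin ω with h | h <;> simp [h]
  have hG1 : ∀ ω, |G ω| ≤ 1 := by intro ω; rcases hGbin ω with h | h <;> simp [h]
  have h1A1 : ∀ ω, |1 - A ω| ≤ 1 := by intro ω; rcases hAbin ω with h | h <;> simp [h]
  have h1G1 : ∀ ω, |1 - G ω| ≤ 1 := by intro ω; rcases hGbin ω with h | h <;> simp [h]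
  have hAGb : ∀ ω, |A ω * G ω| ≤ 1 := by
    intro ω; rcases hAbin ω with h | h <;> rcases hGbin ω with h' | h' <;> simp [h, h']
  have hGAb : ∀ ω, |G ω * A ω| ≤ 1 := by
    intro ω; rcases hAbin ω with h | h <;> rcases hGbin ω with h' | h' <;> simp [h, h']
  have h1AGb : ∀ ω, |(1 - A ω) * G ω| ≤ 1 := by
    intro ω; rcases hAbin ω with h | h <;> rcases hGbin ω with h' | h' <;> simp [h, h']
  have h1GAb : ∀ ω, |(1 - G ω) * A ω| ≤ 1 := by
    intro ω; rcases hAbin ω with h | h <;> rcases hGbin ω with h' | h' <;> simp [h, h']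
  have hA1Gb : ∀ ω, |A ω * (1 - G ω)| ≤ 1 := by
    intro ω; rcases hAbin ω with h | h <;> rcases hGbin ω with h' | h' <;> simp [h, h']
  have he1b : ∀ᵐ ω ∂P, |e1 (X ω)| ≤ 1 := by
    filter_upwards [hpose] with ω h; rw [abs_le]; constructor <;> linarith [h.1, h.2]
  have hπb : ∀ᵐ ω ∂P, |π (X ω)| ≤ 1 := by
    filter_upwards [hposπ] with ω h; rw [abs_le]; constructor <;> linarith [h.1, h.2]
  have he0b : ∀ᵐ ω ∂P, |e0 (X ω)| ≤ 1 := by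
    filter_upwards [hpose0] with ω h; rw [abs_le]; constructor <;> linarith [h.1, h.2]
  -- integrabilities of basic pieces
  have hGint : Integrable G P := by
    refine (integrable_const (1:ℝ)).mono' hG.aestronglyMeasurable ?_
    filter_upwards with ω; rw [Real.norm_eq_abs]; exact hG1 ω
  have hAG : Integrable (fun ω => A ω * G ω) P :=
    aux_int_mul_le_one hA.aestronglyMeasurable (Filter.Eventually.of_forall hA1) hGint
  have h1AG : Integrable (fun ω => (1 - A ω) * G ω) P :=
    aux_int_mul_le_one (measurable_const.sub hA).aestronglyMeasurable
      (Filter.Eventually.of_forall h1A1) hGint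
  have hA1G : Integrable (fun ω => A ω * (1 - G ω)) P :=
    aux_int_mul_le_one hA.aestronglyMeasurable (Filter.Eventually.of_forall hA1)
      ((integrable_const (1:ℝ)).sub hGint)
  have hYeq : Y = fun ω => A ω * Y1 ω + (1 - A ω) * Y0 ω := funext hcons
  have hYm : Measurable Y := by
    rw [hYeq]; exact (hA.mul hY1m).add ((measurable_const.sub hA).mul hY0m)
  have hYint : Integrable Y P := by
    rw [hYeq]
    exact (aux_int_mul_le_one hA.aestronglyMeasurable (Filter.Eventually.of_forall hA1) hY1).add
      (aux_int_mul_le_one (measurable_const.sub hA).aestronglyMeasurable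
        (Filter.Eventually.of_forall h1A1) hY0)
  -- extended conditional independence hypotheses
  have hunconf' : ∀ f : ℝ × ℝ → ℝ, Measurable f → Integrable (fun ω => f (Y0 ω, Y1 ω)) P →
      P[fun ω => G ω * A ω * f (Y0 ω, Y1 ω) | mX X]
        =ᵐ[P] fun ω => e1 (X ω) * (P[fun ω => G ω * f (Y0 ω, Y1 ω) | mX X]) ω := by
    intro f hf hfi
    exact condexp_ext_of_integrable (mX X) P Y0 Y1 (fun ω => G ω * A ω) G (fun ω => e1 (X ω))
      hY0m hY1m (hG.mul hA) hG hGAb hG1 he1b (he1m.comp hX).aestronglyMeasurable hunconf f hf hfi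
  have hunconf0' : ∀ f : ℝ × ℝ → ℝ, Measurable f → Integrable (fun ω => f (Y0 ω, Y1 ω)) P →
      P[fun ω => (1 - G ω) * A ω * f (Y0 ω, Y1 ω) | mX X]
        =ᵐ[P] fun ω => e0 (X ω) * (P[fun ω => (1 - G ω) * f (Y0 ω, Y1 ω) | mX X]) ω := by
    intro f hf hfi
    exact condexp_ext_of_integrable (mX X) P Y0 Y1 (fun ω => (1 - G ω) * A ω)
      (fun ω => 1 - G ω) (fun ω => e0 (X ω))
      hY0m hY1m ((measurable_const.sub hG).mul hA) (measurable_const.sub hG)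
      h1GAb h1G1 he0b (he0m.comp hX).aestronglyMeasurable hunconf0 f hf hfi
  have htrans' : ∀ f : ℝ × ℝ → ℝ, Measurable f → Integrable (fun ω => f (Y0 ω, Y1 ω)) P →
      P[fun ω => G ω * f (Y0 ω, Y1 ω) | mX X]
        =ᵐ[P] fun ω => π (X ω) * (P[fun ω => f (Y0 ω, Y1 ω) | mX X]) ω := by
    intro f hf hfi
    have base := condexp_ext_of_integrable (mX X) P Y0 Y1 G (fun _ => (1:ℝ))
      (fun ω => π (X ω)) hY0m hY1m hG measurable_const hG1 (fun ω => by norm_num) hπb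
      (hπm.comp hX).aestronglyMeasurable
      (fun g hgm hgb => by
        refine (htrans g hgm hgb).trans ?_
        have h1 : P[fun ω => g (Y0 ω, Y1 ω) | mX X] =ᵐ[P]
            P[fun ω => (1:ℝ) * g (Y0 ω, Y1 ω) | mX X] :=
          condExp_congr_ae (Filter.Eventually.of_forall fun ω => (one_mul _).symm)
        filter_upwards [h1] with ω h
        show π (X ω) * (P[fun ω => g (Y0 ω, Y1 ω) | mX X]) ω
          = π (X ω) * (P[fun ω => (1:ℝ) * g (Y0 ω, Y1 ω) | mX X]) ω
        rw [h])
      f hf hfi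
    refine base.trans ?_
    have h1 : P[fun ω => (1:ℝ) * f (Y0 ω, Y1 ω) | mX X] =ᵐ[P]
        P[fun ω => f (Y0 ω, Y1 ω) | mX X] :=
      condExp_congr_ae (Filter.Eventually.of_forall fun ω => one_mul _)
    filter_upwards [h1] with ω h
    show π (X ω) * (P[fun ω => (1:ℝ) * f (Y0 ω, Y1 ω) | mX X]) ω
      = π (X ω) * (P[fun ω => f (Y0 ω, Y1 ω) | mX X]) ω
    rw [h]
  -- identification of μ1 with E[Y1|X]
  have hAGY1 : P[fun ω => A ω * G ω * Y ω | mX X] =ᵐ[P]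
      P[fun ω => G ω * A ω * Y1 ω | mX X] :=
    condExp_congr_ae (Filter.Eventually.of_forall fun ω => by
      rcases hAbin ω with h | h <;> simp [h, hcons ω] <;> ring)
  have hGY1 : P[fun ω => G ω * Y1 ω | mX X] =ᵐ[P]
      fun ω => π (X ω) * (P[Y1 | mX X]) ω :=
    htrans' (fun p => p.2) measurable_snd hY1
  have hGAY1 : P[fun ω => G ω * A ω * Y1 ω | mX X] =ᵐ[P]
      fun ω => e1 (X ω) * (P[fun ω => G ω * Y1 ω | mX X]) ω :=
    hunconf' (fun p => p.2) measurable_snd hY1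
  have hF1 : (fun ω => μ1 (X ω)) =ᵐ[P] P[Y1 | mX X] := by
    have hchain : (fun ω => μ1 (X ω) * e1 (X ω) * π (X ω)) =ᵐ[P]
        fun ω => e1 (X ω) * (π (X ω) * (P[Y1 | mX X]) ω) := by
      refine ((hμ1.trans hAGY1).trans hGAY1).trans ?_
      filter_upwards [hGY1] with ω h
      rw [h]
    filter_upwards [hchain, hpose, hposπ] with ω h h1 h2
    apply mul_right_cancel₀ (mul_ne_zero (ne_of_gt h1.1) (ne_of_gt h2.1))
    linear_combination h
  -- identification of μ0 with E[Y0|X]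
  have hGY0int : Integrable (fun ω => G ω * Y0 ω) P :=
    aux_int_mul_le_one hG.aestronglyMeasurable (Filter.Eventually.of_forall hG1) hY0
  have hGAY0int : Integrable (fun ω => G ω * A ω * Y0 ω) P :=
    aux_int_mul_le_one (hG.mul hA).aestronglyMeasurable (Filter.Eventually.of_forall hGAb) hY0
  have h1AGY : P[fun ω => (1 - A ω) * G ω * Y ω | mX X] =ᵐ[P]
      P[(fun ω => G ω * Y0 ω) - (fun ω => G ω * A ω * Y0 ω) | mX X] :=
    condExp_congr_ae (Filter.Eventually.of_forall fun ω => by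
      rcases hAbin ω with h | h <;> simp [Pi.sub_apply, h, hcons ω] <;> ring)
  have hGY0 : P[fun ω => G ω * Y0 ω | mX X] =ᵐ[P]
      fun ω => π (X ω) * (P[Y0 | mX X]) ω :=
    htrans' (fun p => p.1) measurable_fst hY0
  have hGAY0 : P[fun ω => G ω * A ω * Y0 ω | mX X] =ᵐ[P]
      fun ω => e1 (X ω) * (P[fun ω => G ω * Y0 ω | mX X]) ω :=
    hunconf' (fun p => p.1) measurable_fst hY0
  have hF2 : (fun ω => μ0 (X ω)) =ᵐ[P] P[Y0 | mX X] := by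
    have hchain : (fun ω => μ0 (X ω) * (1 - e1 (X ω)) * π (X ω)) =ᵐ[P]
        fun ω => π (X ω) * (P[Y0 | mX X]) ω -
          e1 (X ω) * (π (X ω) * (P[Y0 | mX X]) ω) := by
      refine ((hμ0.trans h1AGY).trans (condExp_sub (m := mX X) hGY0int hGAY0int)).trans ?_
      filter_upwards [hGY0, hGAY0] with ω h h'
      rw [Pi.sub_apply, h', h]
    filter_upwards [hchain, hpose, hposπ] with ω h h1 h2
    have he : (1:ℝ) - e1 (X ω) ≠ 0 := ne_of_gt (by linarith [h1.2])
    apply mul_right_cancel₀ (mul_ne_zero he (ne_of_gt h2.1))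
    linear_combination h
  have hμ1Xint : Integrable (fun ω => μ1 (X ω)) P := integrable_condExp.congr hF1.symm
  have hμ0Xint : Integrable (fun ω => μ0 (X ω)) P := integrable_condExp.congr hF2.symm
  -- conditional expectations of the binary weights
  have hE_1AG : P[fun ω => (1 - A ω) * G ω | mX X] =ᵐ[P]
      fun ω => (1 - e1 (X ω)) * π (X ω) := by
    have hptw : P[fun ω => (1 - A ω) * G ω | mX X] =ᵐ[P]
        P[G - (fun ω => A ω * G ω) | mX X] :=
      condExp_congr_ae (Filter.Eventually.of_forall fun ω => by
        simp [Pi.sub_apply]; ring)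
    refine (hptw.trans (condExp_sub (m := mX X) hGint hAG)).trans ?_
    filter_upwards [hπ, he1] with ω h1 h2
    rw [Pi.sub_apply, ← h1, ← h2]
    ring
  -- c0 and constants
  have hq' : (0:ℝ) < 1 - q := by linarith
  have hc0 : (1 - q) * ebar ≠ 0 := ne_of_gt (mul_pos hq' hebarpos)
  have hψint : Integrable (fun ω => (1 - q) * ebar * φatt ω) P := hφattint.const_mul _
  -- ψ1 : the (A=1,G=1) part
  set k1 : ℝ → ℝ := fun x => (1 - π x) * e0 x / π x / e1 x with hk1
  have hk1m : Measurable k1 := by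
    rw [hk1]; exact (((measurable_const.sub hπm).mul he0m).div hπm).div he1m
  have hV1int : Integrable (fun ω => A ω * G ω * Y ω) P :=
    aux_int_mul_le_one (hA.mul hG).aestronglyMeasurable (Filter.Eventually.of_forall hAGb) hYint
  have hAGμ1int : Integrable (fun ω => μ1 (X ω) * (A ω * G ω)) P :=
    (aux_int_mul_le_one (hA.mul hG).aestronglyMeasurable
      (Filter.Eventually.of_forall hAGb) hμ1Xint).congr
      (Filter.Eventually.of_forall fun ω => mul_comm _ _)
  have hpull1 : P[fun ω => μ1 (X ω) * (A ω * G ω) | mX X] =ᵐ[P]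
      fun ω => μ1 (X ω) * (P[fun ω => A ω * G ω | mX X]) ω :=
    condExp_mul_of_stronglyMeasurable_left ((hμ1m.comp hXm).stronglyMeasurable) hAGμ1int hAG
  have hEV1 : P[fun ω => A ω * G ω * Y ω - μ1 (X ω) * (A ω * G ω) | mX X]
      =ᵐ[P] (0 : Ω → ℝ) := by
    refine (condExp_sub (m := mX X) hV1int hAGμ1int).trans ?_
    filter_upwards [hμ1, hpull1, he1] with ω h1 h2 h3
    rw [Pi.sub_apply, ← h1, h2, ← h3]
    simp only [Pi.zero_apply]
    ring
  have E1 : (fun ω => k1 (X ω) * (A ω * G ω * Y ω - μ1 (X ω) * (A ω * G ω))) =ᵐ[P]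
      fun ω => A ω * G ω * ((1 - q) * ebar * φatt ω) := by
    filter_upwards [hpose, hposπ] with ω h1 h2
    have he10 : e1 (X ω) ≠ 0 := ne_of_gt h1.1
    have he11 : (1:ℝ) - e1 (X ω) ≠ 0 := ne_of_gt (by linarith [h1.2])
    have hπ0 : π (X ω) ≠ 0 := ne_of_gt h2.1
    rcases hAbin ω with h | h <;> rcases hGbin ω with h' | h' <;>
      rw [hφatt ω, hk1, h, h'] <;> field_simp <;> ring
  have hψ1int : Integrable (fun ω => A ω * G ω * ((1 - q) * ebar * φatt ω)) P :=
    aux_int_mul_le_one (hA.mul hG).aestronglyMeasurable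
      (Filter.Eventually.of_forall hAGb) hψint
  have hk1V1int : Integrable
      (fun ω => k1 (X ω) * (A ω * G ω * Y ω - μ1 (X ω) * (A ω * G ω))) P :=
    hψ1int.congr E1.symm
  have hEψ1 : P[fun ω => k1 (X ω) * (A ω * G ω * Y ω - μ1 (X ω) * (A ω * G ω)) | mX X]
      =ᵐ[P] (0 : Ω → ℝ) := by
    have hpull := condExp_mul_of_stronglyMeasurable_left ((hk1m.comp hXm).stronglyMeasurable)
      hk1V1int (hV1int.sub hAGμ1int)
    refine hpull.trans ?_
    filter_upwards [hEV1] with ω h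
    simp only [Pi.mul_apply, Pi.zero_apply] at *
    rw [h, mul_zero]
  have hint1 : ∫ ω, A ω * G ω * ((1 - q) * ebar * φatt ω) ∂P = 0 := by
    rw [← integral_congr_ae E1, ← integral_condExp hm, integral_congr_ae hEψ1]
    simp
  -- ψ2 : the (A=0,G=1) part
  set k0 : ℝ → ℝ := fun x => -((1 - π x) * e0 x / π x / (1 - e1 x)) with hk0
  have hk0m : Measurable k0 := by
    rw [hk0]
    exact ((((measurable_const.sub hπm).mul he0m).div hπm).div
      (measurable_const.sub he1m)).neg
  have hV0int : Integrable (fun ω => (1 - A ω) * G ω * Y ω) P :=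
    aux_int_mul_le_one ((measurable_const.sub hA).mul hG).aestronglyMeasurable
      (Filter.Eventually.of_forall h1AGb) hYint
  have h1AGμ0int : Integrable (fun ω => μ0 (X ω) * ((1 - A ω) * G ω)) P :=
    (aux_int_mul_le_one ((measurable_const.sub hA).mul hG).aestronglyMeasurable
      (Filter.Eventually.of_forall h1AGb) hμ0Xint).congr
      (Filter.Eventually.of_forall fun ω => mul_comm _ _)
  have hpull0 : P[fun ω => μ0 (X ω) * ((1 - A ω) * G ω) | mX X] =ᵐ[P]
      fun ω => μ0 (X ω) * (P[fun ω => (1 - A ω) * G ω | mX X]) ω :=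
    condExp_mul_of_stronglyMeasurable_left ((hμ0m.comp hXm).stronglyMeasurable) h1AGμ0int h1AG
  have hEV0 : P[fun ω => (1 - A ω) * G ω * Y ω - μ0 (X ω) * ((1 - A ω) * G ω) | mX X]
      =ᵐ[P] (0 : Ω → ℝ) := by
    refine (condExp_sub (m := mX X) hV0int h1AGμ0int).trans ?_
    filter_upwards [hμ0, hpull0, hE_1AG] with ω h1 h2 h3
    rw [Pi.sub_apply, ← h1, h2, h3]
    simp only [Pi.zero_apply]
    ring
  have E2 : (fun ω => k0 (X ω) * ((1 - A ω) * G ω * Y ω - μ0 (X ω) * ((1 - A ω) * G ω)))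
      =ᵐ[P] fun ω => (1 - A ω) * G ω * ((1 - q) * ebar * φatt ω) := by
    filter_upwards [hpose, hposπ] with ω h1 h2
    have he10 : e1 (X ω) ≠ 0 := ne_of_gt h1.1
    have he11 : (1:ℝ) - e1 (X ω) ≠ 0 := ne_of_gt (by linarith [h1.2])
    have hπ0 : π (X ω) ≠ 0 := ne_of_gt h2.1
    rcases hAbin ω with h | h <;> rcases hGbin ω with h' | h' <;>
      rw [hφatt ω, hk0, h, h'] <;> field_simp <;> ring
  have hψ2int : Integrable (fun ω => (1 - A ω) * G ω * ((1 - q) * ebar * φatt ω)) P :=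
    aux_int_mul_le_one ((measurable_const.sub hA).mul hG).aestronglyMeasurable
      (Filter.Eventually.of_forall h1AGb) hψint
  have hk0V0int : Integrable
      (fun ω => k0 (X ω) * ((1 - A ω) * G ω * Y ω - μ0 (X ω) * ((1 - A ω) * G ω))) P :=
    hψ2int.congr E2.symm
  have hEψ2 : P[fun ω => k0 (X ω) * ((1 - A ω) * G ω * Y ω - μ0 (X ω) * ((1 - A ω) * G ω))
      | mX X] =ᵐ[P] (0 : Ω → ℝ) := by
    have hpull := condExp_mul_of_stronglyMeasurable_left ((hk0m.comp hXm).stronglyMeasurable)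
      hk0V0int (hV0int.sub h1AGμ0int)
    refine hpull.trans ?_
    filter_upwards [hEV0] with ω h
    simp only [Pi.mul_apply, Pi.zero_apply] at *
    rw [h, mul_zero]
  have hint2 : ∫ ω, (1 - A ω) * G ω * ((1 - q) * ebar * φatt ω) ∂P = 0 := by
    rw [← integral_congr_ae E2, ← integral_condExp hm, integral_congr_ae hEψ2]
    simp
  -- ψ3 : the (A=1,G=0) part
  have E3 : (fun ω => (μ1 (X ω) - μ0 (X ω) - τatt) * (A ω * (1 - G ω))) =ᵐ[P]
      fun ω => (1 - G ω) * A ω * ((1 - q) * ebar * φatt ω) := by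
    filter_upwards [hpose, hposπ] with ω h1 h2
    have he10 : e1 (X ω) ≠ 0 := ne_of_gt h1.1
    have he11 : (1:ℝ) - e1 (X ω) ≠ 0 := ne_of_gt (by linarith [h1.2])
    have hπ0 : π (X ω) ≠ 0 := ne_of_gt h2.1
    rcases hAbin ω with h | h <;> rcases hGbin ω with h' | h' <;>
      rw [hφatt ω, h, h'] <;> field_simp <;> ring
  have hψ3int : Integrable (fun ω => (1 - G ω) * A ω * ((1 - q) * ebar * φatt ω)) P :=
    aux_int_mul_le_one ((measurable_const.sub hG).mul hA).aestronglyMeasurable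
      (Filter.Eventually.of_forall h1GAb) hψint
  have hfμint : Integrable (fun ω => μ1 (X ω) - μ0 (X ω) - τatt) P :=
    (hμ1Xint.sub hμ0Xint).sub (integrable_const τatt)
  have hfμAint : Integrable (fun ω => (μ1 (X ω) - μ0 (X ω) - τatt) * (A ω * (1 - G ω))) P :=
    hψ3int.congr E3.symm
  have hpull3 : P[fun ω => (μ1 (X ω) - μ0 (X ω) - τatt) * (A ω * (1 - G ω)) | mX X] =ᵐ[P]
      fun ω => (μ1 (X ω) - μ0 (X ω) - τatt) * (P[fun ω => A ω * (1 - G ω) | mX X]) ω :=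
    condExp_mul_of_stronglyMeasurable_left
      ((((hμ1m.comp hXm).sub (hμ0m.comp hXm)).sub measurable_const).stronglyMeasurable)
      hfμAint hA1G
  -- conditional expectation of A(1-G)(Y1-Y0)
  have hGdiffint : Integrable (fun ω => G ω * (Y1 ω - Y0 ω)) P :=
    aux_int_mul_le_one hG.aestronglyMeasurable (Filter.Eventually.of_forall hG1) (hY1.sub hY0)
  have hinner : P[fun ω => (1 - G ω) * (Y1 ω - Y0 ω) | mX X] =ᵐ[P]
      fun ω => (1 - π (X ω)) * (μ1 (X ω) - μ0 (X ω)) := by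
    have hptw : P[fun ω => (1 - G ω) * (Y1 ω - Y0 ω) | mX X] =ᵐ[P]
        P[(fun ω => Y1 ω - Y0 ω) - (fun ω => G ω * (Y1 ω - Y0 ω)) | mX X] :=
      condExp_congr_ae (Filter.Eventually.of_forall fun ω => by
        simp [Pi.sub_apply]; ring)
    refine (hptw.trans (condExp_sub (m := mX X) (hY1.sub hY0) hGdiffint)).trans ?_
    have hdsub : P[fun ω => Y1 ω - Y0 ω | mX X] =ᵐ[P]
        fun ω => (P[Y1 | mX X]) ω - (P[Y0 | mX X]) ω :=
      condExp_sub (m := mX X) hY1 hY0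
    have hGdiff : P[fun ω => G ω * (Y1 ω - Y0 ω) | mX X] =ᵐ[P]
        fun ω => π (X ω) * (P[fun ω => Y1 ω - Y0 ω | mX X]) ω :=
      htrans' (fun p => p.2 - p.1) (measurable_snd.sub measurable_fst) (hY1.sub hY0)
    filter_upwards [hdsub, hGdiff, hF1, hF2] with ω h1 h2 h3 h4
    rw [Pi.sub_apply, show P[Y1 - Y0 | mX X] ω = P[Y1 | mX X] ω - P[Y0 | mX X] ω from h1,
      h2, h1, ← h3, ← h4]
    ring
  have F6 : P[fun ω => A ω * (1 - G ω) * (Y1 ω - Y0 ω) | mX X] =ᵐ[P]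
      fun ω => (μ1 (X ω) - μ0 (X ω)) * (e0 (X ω) * (1 - π (X ω))) := by
    have hptw : P[fun ω => A ω * (1 - G ω) * (Y1 ω - Y0 ω) | mX X] =ᵐ[P]
        P[fun ω => (1 - G ω) * A ω * (Y1 ω - Y0 ω) | mX X] :=
      condExp_congr_ae (Filter.Eventually.of_forall fun ω => by ring)
    have hu0 : P[fun ω => (1 - G ω) * A ω * (Y1 ω - Y0 ω) | mX X] =ᵐ[P]
        fun ω => e0 (X ω) * (P[fun ω => (1 - G ω) * (Y1 ω - Y0 ω) | mX X]) ω :=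
      hunconf0' (fun p => p.2 - p.1) (measurable_snd.sub measurable_fst) (hY1.sub hY0)
    refine (hptw.trans hu0).trans ?_
    filter_upwards [hinner] with ω h
    rw [h]
    ring
  -- the three integral identities for ψ3
  have hwint : Integrable (fun ω => e0 (X ω) * (1 - π (X ω))) P := by
    refine aux_int_mul_le_one (he0m.comp hX).aestronglyMeasurable he0b ?_
    refine (integrable_const (1:ℝ)).sub ?_
    refine (integrable_const (1:ℝ)).mono' (hπm.comp hX).aestronglyMeasurable ?_
    filter_upwards [hπb] with ω h; rwa [Real.norm_eq_abs]
  have hwb : ∀ᵐ ω ∂P, |e0 (X ω) * (1 - π (X ω))| ≤ 1 := by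
    filter_upwards [hpose0, hposπ] with ω h1 h2
    rw [abs_mul]
    refine mul_le_one₀ ?_ (abs_nonneg _) ?_
    · rw [abs_le]; constructor <;> linarith [h1.1, h1.2]
    · rw [abs_le]; constructor <;> linarith [h2.1, h2.2]
  have hμdiffwint : Integrable
      (fun ω => (μ1 (X ω) - μ0 (X ω)) * (e0 (X ω) * (1 - π (X ω)))) P :=
    (aux_int_mul_le_one ((he0m.comp hX).mul (measurable_const.sub (hπm.comp hX))).aestronglyMeasurable
      hwb (hμ1Xint.sub hμ0Xint)).congr
      (Filter.Eventually.of_forall fun ω => mul_comm _ _)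
  have ha : ∫ ω, (μ1 (X ω) - μ0 (X ω)) * (e0 (X ω) * (1 - π (X ω))) ∂P
      = τatt * ((1 - q) * ebar) := by
    rw [← integral_congr_ae F6, integral_condExp hm, hτatt]
    field_simp
  have hb : ∫ ω, e0 (X ω) * (1 - π (X ω)) ∂P = (1 - q) * ebar := by
    rw [integral_congr_ae he0, integral_condExp hm, hebar]
    field_simp
  have hint3 : ∫ ω, (1 - G ω) * A ω * ((1 - q) * ebar * φatt ω) ∂P = 0 := by
    rw [← integral_congr_ae E3, ← integral_condExp hm]
    have hEψ3 : P[fun ω => (μ1 (X ω) - μ0 (X ω) - τatt) * (A ω * (1 - G ω)) | mX X] =ᵐ[P]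
        fun ω => (μ1 (X ω) - μ0 (X ω) - τatt) * (e0 (X ω) * (1 - π (X ω))) := by
      refine hpull3.trans ?_
      filter_upwards [he0] with ω h
      rw [← h]
    rw [integral_congr_ae hEψ3]
    have hsplit : (fun ω => (μ1 (X ω) - μ0 (X ω) - τatt) * (e0 (X ω) * (1 - π (X ω))))
        = fun ω => (μ1 (X ω) - μ0 (X ω)) * (e0 (X ω) * (1 - π (X ω)))
          - τatt * (e0 (X ω) * (1 - π (X ω))) := by
      funext ω; ring
    rw [hsplit, integral_sub hμdiffwint (hwint.const_mul τatt), ha, integral_const_mul, hb]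
    ring
  -- combine
  have Esum : ∀ ω, (1 - q) * ebar * φatt ω
      = A ω * G ω * ((1 - q) * ebar * φatt ω)
        + (1 - A ω) * G ω * ((1 - q) * ebar * φatt ω)
        + (1 - G ω) * A ω * ((1 - q) * ebar * φatt ω) := by
    intro ω
    rcases hAbin ω with h | h <;> rcases hGbin ω with h' | h'
    · rw [h, h']; simp [hφatt ω, h, h']
    · rw [h, h']; ring
    · rw [h, h']; ring
    · rw [h, h']; ring
  have htot : ∫ ω, (1 - q) * ebar * φatt ω ∂P = 0 := by
    calc ∫ ω, (1 - q) * ebar * φatt ω ∂P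
        = ∫ ω, (A ω * G ω * ((1 - q) * ebar * φatt ω)
            + (1 - A ω) * G ω * ((1 - q) * ebar * φatt ω)
            + (1 - G ω) * A ω * ((1 - q) * ebar * φatt ω)) ∂P :=
          integral_congr_ae (Filter.Eventually.of_forall Esum)
      _ = (∫ ω, (A ω * G ω * ((1 - q) * ebar * φatt ω)
            + (1 - A ω) * G ω * ((1 - q) * ebar * φatt ω)) ∂P)
          + ∫ ω, (1 - G ω) * A ω * ((1 - q) * ebar * φatt ω) ∂P :=
          integral_add (hψ1int.add hψ2int) hψ3int
      _ = ((∫ ω, A ω * G ω * ((1 - q) * ebar * φatt ω) ∂P)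
          + ∫ ω, (1 - A ω) * G ω * ((1 - q) * ebar * φatt ω) ∂P)
          + ∫ ω, (1 - G ω) * A ω * ((1 - q) * ebar * φatt ω) ∂P := by
          rw [integral_add hψ1int hψ2int]
      _ = 0 := by rw [hint1, hint2, hint3]; ring
  rw [integral_const_mul] at htot
  exact (mul_eq_zero.1 htot).resolve_left hc0
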